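/- arXiv:0707.1102 — 2 statements merged into one kernel-verified Lean document; each statement's English description precedes it below -/
import Mathlib

section
/- Let p = 2ℓ + 1 be a prime with ℓ > 1 odd, let n be an odd positive integer, and let a be a nonzero element of F_p. Then for f = x^n·(x^2 + a), the remainder of f^{ℓ-1} upon division by x^p - x has degree equal to p - 1; in particular f is not a permutation polynomial of F_p. -/
open Polynomial Finset

-- sum of x^e over a finite field, e > 0
lemma sum_pow_field {K : Type*} [Field K] [Fintype K] [DecidableEq K] (e : ℕ) (he : 0 < e) :
    ∑ x : K, x ^ e = if Fintype.card K - 1 ∣ e then -1 else 0 := by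
  let φ : Kˣ ↪ K := ⟨fun x ↦ x, fun _ _ => Units.ext⟩
  have hmap : univ.map φ = univ \ {0} := by
    ext x
    simp only [mem_map, mem_univ, Function.Embedding.coeFn_mk, true_and, mem_sdiff,
      mem_singleton, φ]
    exact ⟨fun ⟨u, hu⟩ => by rw [← hu]; exact u.ne_zero, fun h => ⟨Units.mk0 x h, rfl⟩⟩
  calc
    ∑ x : K, x ^ e = ∑ x ∈ univ \ {(0 : K)}, x ^ e := by
      rw [← sum_sdiff ({0} : Finset K).subset_univ, sum_singleton, zero_pow he.ne', add_zero]
    _ = ∑ x : Kˣ, (x ^ e : K) := by simp [φ, ← hmap, univ.sum_map φ]; rfl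
    _ = _ := FiniteField.sum_pow_units K e

lemma sum_eval_eq_neg_coeff {p : ℕ} [Fact p.Prime] (h : (ZMod p)[X]) (hd : h.natDegree < p) :
    ∑ x : ZMod p, h.eval x = -(h.coeff (p - 1)) := by
  have hp2 : 2 ≤ p := (Fact.out : p.Prime).two_le
  have hcard : Fintype.card (ZMod p) = p := ZMod.card p
  calc ∑ x : ZMod p, h.eval x = ∑ x : ZMod p, ∑ e ∈ range p, h.coeff e * x ^ e := by
        refine Finset.sum_congr rfl fun x _ => ?_
        exact eval_eq_sum_range' hd x
    _ = ∑ e ∈ range p, h.coeff e * ∑ x : ZMod p, x ^ e := by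
        rw [Finset.sum_comm]; simp [Finset.mul_sum]
    _ = ∑ e ∈ range p, (if e = p - 1 then -(h.coeff (p - 1)) else 0) := by
        refine sum_congr rfl fun e he => ?_
        rw [mem_range] at he
        rcases Nat.eq_zero_or_pos e with rfl | hepos
        · rw [if_neg (by omega)]
          simp [Finset.card_univ, hcard, ZMod.natCast_self]
        · rw [sum_pow_field e hepos, hcard]
          by_cases hdvd : p - 1 ∣ e
          · have : e = p - 1 := by
              obtain ⟨c, hc⟩ := hdvd
              match c, hc with
              | 0, hc => omega
              | 1, hc => omega
              | (c+2), hc =>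
                have h2 : (p-1) * 2 ≤ (p-1) * (c+2) := Nat.mul_le_mul_left _ (by omega)
                omega
            rw [if_pos this, if_pos hdvd, this]
            ring
          · rw [if_neg hdvd, if_neg (by rintro rfl; exact hdvd dvd_rfl), mul_zero]
    _ = -(h.coeff (p - 1)) := by
        rw [Finset.sum_ite_eq' (range p) (p - 1)]
        rw [if_pos (mem_range.2 (by omega))]

theorem stmt_13 (p ℓ : ℕ) (hp : p.Prime) (hpl : p = 2 * ℓ + 1)
    (hl1 : 1 < ℓ) (hlodd : Odd ℓ)
    (n : ℕ) (hn : 0 < n) (hnodd : Odd n)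
    (a : ZMod p) (ha : a ≠ 0) :
    (((X ^ n * (X ^ 2 + C a)) ^ (ℓ - 1) %ₘ (X ^ p - X)).degree
        = ((p - 1 : ℕ) : WithBot ℕ)) ∧
      ¬ Function.Bijective
        (fun x : ZMod p => Polynomial.eval x (X ^ n * (X ^ 2 + C a))) := by
  haveI : Fact p.Prime := ⟨hp⟩
  have hℓ : 0 < ℓ := by omega
  obtain ⟨j, hj⟩ := hlodd
  set m : ℕ := (ℓ - 1) / 2 with hmdef
  have hm : ℓ - 1 = 2 * m := by omega
  set t : ℕ := n * m with htdef
  have hr : t % ℓ < ℓ := Nat.mod_lt t hℓ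
  have hdm : ℓ * (t / ℓ) + t % ℓ = t := Nat.div_add_mod t ℓ
  obtain ⟨k0, hk0lt, hk0dvd⟩ : ∃ k0, k0 < ℓ ∧ ℓ ∣ (t % ℓ + k0) := by
    rcases Nat.eq_zero_or_pos (t % ℓ) with h0 | h0
    · exact ⟨0, hℓ, by simp [h0]⟩
    · exact ⟨ℓ - t % ℓ, by omega, ⟨1, by omega⟩⟩
  have hsmall : ∀ k, k < ℓ → ℓ ∣ (t % ℓ + k) → t % ℓ + k = 0 ∨ t % ℓ + k = ℓ := by
    rintro k hk ⟨c, hc⟩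
    match c, hc with
    | 0, hc => omega
    | 1, hc => omega
    | (c+2), hc =>
      have h4 : ℓ * 2 ≤ ℓ * (c + 2) := Nat.mul_le_mul_left _ (by omega)
      omega
  have hkey : ∀ k < ℓ, ((p - 1) ∣ n * (ℓ - 1) + 2 * k ↔ k = k0) := by
    intro k hk
    have h2 : n * (ℓ - 1) + 2 * k = 2 * (t + k) := by rw [hm, htdef]; ring
    have hp1 : p - 1 = 2 * ℓ := by omega
    rw [hp1, h2, Nat.mul_dvd_mul_iff_left (by norm_num : (0:ℕ) < 2)]
    have h3 : t + k = ℓ * (t / ℓ) + (t % ℓ + k) := by omega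
    rw [h3, Nat.dvd_add_right ⟨t / ℓ, rfl⟩]
    constructor
    · intro hd
      rcases hsmall k hk hd with h | h <;> rcases hsmall k0 hk0lt hk0dvd with h' | h' <;> omega
    · rintro rfl; exact hk0dvd
  -- the coefficient value
  set cval : ZMod p := a ^ (ℓ - 1 - k0) * ((ℓ - 1).choose k0 : ZMod p) with hcval
  have hc_ne : cval ≠ 0 := by
    refine mul_ne_zero (pow_ne_zero _ ha) ?_
    rw [Ne, ZMod.natCast_eq_zero_iff]
    intro hdvd
    have h1 : (ℓ - 1).choose k0 ∣ Nat.factorial (ℓ - 1) :=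
      ⟨Nat.factorial k0 * Nat.factorial (ℓ - 1 - k0), by
        rw [← Nat.choose_mul_factorial_mul_factorial (show k0 ≤ ℓ - 1 by omega)]; ring⟩
    have h2 : p ≤ ℓ - 1 := (Nat.Prime.dvd_factorial hp).mp (hdvd.trans h1)
    omega
  -- the main sum computation
  have hsum : ∑ x : ZMod p, (x ^ n * (x ^ 2 + a)) ^ (ℓ - 1) = -cval := by
    have hstep : ∀ x : ZMod p, (x ^ n * (x ^ 2 + a)) ^ (ℓ - 1)
        = ∑ k ∈ range ℓ, a ^ (ℓ - 1 - k) * ((ℓ - 1).choose k : ZMod p)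
            * x ^ (n * (ℓ - 1) + 2 * k) := by
      intro x
      rw [mul_pow, add_pow]
      have hll : ℓ - 1 + 1 = ℓ := by omega
      rw [hll, Finset.mul_sum]
      refine sum_congr rfl fun k hk => ?_
      rw [pow_add, pow_mul, pow_mul]
      ring
    rw [Finset.sum_congr rfl fun x _ => hstep x, Finset.sum_comm]
    have hterm : ∀ k ∈ range ℓ,
        (∑ x : ZMod p, a ^ (ℓ - 1 - k) * ((ℓ - 1).choose k : ZMod p)
            * x ^ (n * (ℓ - 1) + 2 * k))
          = if k = k0 then -cval else 0 := by
      intro k hk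
      rw [mem_range] at hk
      rw [← Finset.mul_sum, sum_pow_field _ (by
        have : 1 * 2 ≤ n * (ℓ - 1) := Nat.mul_le_mul hn (by omega)
        omega), ZMod.card]
      rw [if_congr (hkey k hk) rfl rfl]
      by_cases hkk : k = k0
      · rw [if_pos hkk, if_pos hkk, hkk, hcval]; ring
      · rw [if_neg hkk, if_neg hkk, mul_zero]
    rw [Finset.sum_congr rfl hterm, Finset.sum_ite_eq' (range ℓ) k0,
      if_pos (mem_range.2 hk0lt)]
  -- polynomial setup
  set f : (ZMod p)[X] := X ^ n * (X ^ 2 + C a) with hf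
  set g : (ZMod p)[X] := f ^ (ℓ - 1) with hg
  set q : (ZMod p)[X] := X ^ p - X with hq
  have hqmonic : q.Monic := monic_X_pow_sub (by
    rw [degree_X]
    exact_mod_cast (by omega : 1 < p))
  have hqdeg : q.degree = (p : WithBot ℕ) := by
    rw [hq, degree_sub_eq_left_of_degree_lt, degree_X_pow]
    rw [degree_X, degree_X_pow]
    exact_mod_cast (by omega : 1 < p)
  have hrdeg : (g %ₘ q).degree < (p : WithBot ℕ) := by
    rw [← hqdeg]; exact degree_modByMonic_lt g hqmonic
  have hrnat : (g %ₘ q).natDegree < p := by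
    rcases eq_or_ne (g %ₘ q) 0 with h0 | h0
    · rw [h0]; simpa using by omega
    · exact (natDegree_lt_iff_degree_lt h0).2 hrdeg
  have hevalg : ∀ x : ZMod p, eval x g = (x ^ n * (x ^ 2 + a)) ^ (ℓ - 1) := by
    intro x; simp [hg, hf]
  have hevalr : ∀ x : ZMod p, eval x (g %ₘ q) = eval x g := by
    intro x
    conv_rhs => rw [← modByMonic_add_div g q]
    have : eval x q = 0 := by simp [hq, ZMod.pow_card]
    simp [this]
  have hcoeff : (g %ₘ q).coeff (p - 1) = cval := by
    have h1 := sum_eval_eq_neg_coeff (g %ₘ q) hrnat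
    rw [Finset.sum_congr rfl fun x _ => hevalr x,
      Finset.sum_congr rfl fun x _ => hevalg x, hsum] at h1
    exact (neg_inj.mp h1).symm
  constructor
  · have hne : g %ₘ q ≠ 0 := fun h0 => hc_ne (by rw [h0] at hcoeff; simpa using hcoeff.symm)
    have hge : p - 1 ≤ (g %ₘ q).natDegree := le_natDegree_of_ne_zero (hcoeff ▸ hc_ne)
    rw [degree_eq_natDegree hne]
    exact_mod_cast congrArg (Nat.cast : ℕ → WithBot ℕ) (by omega : (g %ₘ q).natDegree = p - 1)
  · intro hbij
    have h1 : ∑ x : ZMod p, (eval x f) ^ (ℓ - 1) = ∑ y : ZMod p, y ^ (ℓ - 1) :=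
      hbij.sum_comp (fun y => y ^ (ℓ - 1))
    have h2 : ∑ y : ZMod p, y ^ (ℓ - 1) = 0 := by
      apply FiniteField.sum_pow_lt_card_sub_one
      rw [ZMod.card]; omega
    have h3 : ∑ x : ZMod p, (eval x f) ^ (ℓ - 1) = -cval := by
      rw [← hsum]
      refine Finset.sum_congr rfl fun x _ => ?_
      simp [hf]
    rw [h3, h2] at h1
    exact hc_ne (neg_eq_zero.mp h1)
end

section
/- Let p = 8ℓ + 1 be a prime with ℓ even, let n be an odd positive integer with 0 < n < 2ℓ, and let a be a nonzero element of F_p. Then for f = x^n·(x^4 + a), the remainder of f^{2ℓ} upon division by x^p - x has degree equal to p - 1; in particular f is not a permutation polynomial of F_p. -/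
open Polynomial Finset

lemma sum_pow_zmod (p : ℕ) [Fact p.Prime] {j : ℕ} (hj : 0 < j) :
    ∑ x : ZMod p, x ^ j = if (p - 1) ∣ j then -1 else 0 := by
  classical
  have h := FiniteField.sum_pow_units (ZMod p) j
  rw [ZMod.card p] at h
  rw [← h]
  have h1 : ∑ x : ZMod p, x ^ j = ∑ x ∈ univ.erase (0 : ZMod p), x ^ j :=
    (Finset.sum_erase _ (by simp [zero_pow hj.ne'])).symm
  rw [h1]
  symm
  apply Finset.sum_nbij (fun u : (ZMod p)ˣ => (u : ZMod p))
  · intro u _; simp [u.ne_zero]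
  · intro u _ v _ huv; exact Units.ext huv
  · intro x hx
    simp only [coe_erase, coe_univ, Set.mem_diff, Set.mem_univ, Set.mem_singleton_iff,
      true_and] at hx
    exact ⟨Units.mk0 x hx, by simp, rfl⟩
  · intro u _; rfl

lemma div_char (m k r : ℕ) (hm : 0 < m) (hk : k ≤ 4*m) (hr : r = 1 ∨ r = 3) :
    (4*m ∣ m*r + k) ↔ k = 4*m - m*r := by
  constructor
  · rintro ⟨c, hc⟩
    have h0 : 0 < c := by
      rcases Nat.eq_zero_or_pos c with h | h
      · exfalso; rcases hr with rfl | rfl <;> simp [h] at hc <;> omega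
      · exact h
    have h2 : c ≤ 1 := by
      by_contra h
      push_neg at h
      have : 4*m*2 ≤ 4*m*c := Nat.mul_le_mul_left _ h
      rcases hr with rfl | rfl <;> nlinarith
    have : c = 1 := by omega
    subst this
    rcases hr with rfl | rfl <;> omega
  · rintro rfl
    refine ⟨1, ?_⟩
    rcases hr with rfl | rfl <;> omega

lemma k0_iff (p ℓ m n : ℕ) (hpl : p = 8 * ℓ + 1) (hm : ℓ = m + m) (hmpos : 0 < m)
    (hnodd : Odd n) :
    ∀ k, k ≤ 2*ℓ → ((p - 1 ∣ 2*ℓ*n + 4*k) ↔ k = 4*m - m * (n % 4)) := by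
  intro k hk
  have hr : n % 4 = 1 ∨ n % 4 = 3 := by
    have := Nat.odd_iff.mp hnodd; omega
  have h1 : p - 1 = 4 * (4 * m) := by omega
  subst hm
  have h2 : 2*(m+m)*n + 4*k = 4 * (m * n + k) := by ring
  rw [h1, h2, Nat.mul_dvd_mul_iff_left (by norm_num : 0 < 4)]
  have h3 : m * n = 4 * m * (n / 4) + m * (n % 4) := by
    conv_lhs => rw [← Nat.div_add_mod n 4]
    ring
  rw [h3, add_assoc, Nat.dvd_add_right ⟨n / 4, rfl⟩]
  exact div_char m k (n % 4) hmpos (by omega) hr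

lemma key_sum (p ℓ : ℕ) [Fact p.Prime] (hpl : p = 8 * ℓ + 1)
    (hleven : Even ℓ) (n : ℕ) (hn : 0 < n) (hn2l : n < 2 * ℓ) (hnodd : Odd n)
    (a : ZMod p) (ha : a ≠ 0) :
    ∑ x : ZMod p, (x ^ n * (x ^ 4 + a)) ^ (2 * ℓ) ≠ 0 := by
  have hp : p.Prime := Fact.out
  obtain ⟨m, hm⟩ := hleven
  have hmpos : 0 < m := by omega
  set k0 : ℕ := 4*m - m * (n % 4) with hk0
  have hk0le : k0 ≤ 2*ℓ := by
    have : n % 4 = 1 ∨ n % 4 = 3 := by have := Nat.odd_iff.mp hnodd; omega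
    omega
  have hiff := k0_iff p ℓ m n hpl hm hmpos hnodd
  have hstep : ∀ x : ZMod p, (x ^ n * (x ^ 4 + a)) ^ (2 * ℓ)
      = ∑ k ∈ range (2*ℓ+1), x ^ (2*ℓ*n + 4*k) * (a ^ (2*ℓ-k) * ((2*ℓ).choose k : ZMod p)) := by
    intro x
    rw [mul_pow, add_pow, Finset.mul_sum]
    refine Finset.sum_congr rfl fun k hk => ?_
    rw [← pow_mul, ← pow_mul, mul_comm n (2*ℓ), pow_add]
    ring
  rw [Finset.sum_congr rfl fun x _ => hstep x, Finset.sum_comm]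
  have hinner : ∀ k ∈ range (2*ℓ+1),
      (∑ x : ZMod p, x ^ (2*ℓ*n + 4*k) * (a ^ (2*ℓ-k) * ((2*ℓ).choose k : ZMod p)))
      = (if k = k0 then (-1 : ZMod p) else 0) * (a ^ (2*ℓ-k) * ((2*ℓ).choose k : ZMod p)) := by
    intro k hk
    rw [← Finset.sum_mul, sum_pow_zmod p (Nat.lt_of_lt_of_le (Nat.mul_pos (by omega : 0 < 2*ℓ) hn) (Nat.le_add_right _ _))]
    have := hiff k (by simpa [Nat.lt_succ_iff] using hk)
    simp only [this]; rfl
  rw [Finset.sum_congr rfl hinner]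
  have hsum : ∑ k ∈ range (2*ℓ+1),
      (if k = k0 then (-1 : ZMod p) else 0) * (a ^ (2*ℓ-k) * ((2*ℓ).choose k : ZMod p))
      = -(a ^ (2*ℓ-k0) * ((2*ℓ).choose k0 : ZMod p)) := by
    rw [Finset.sum_eq_single_of_mem k0 (Finset.mem_range.mpr (by omega))]
    · rw [if_pos rfl]; ring
    · intro b _ hb; rw [if_neg hb, zero_mul]
  rw [hsum]
  -- nonzero
  have hchoose : ((2*ℓ).choose k0 : ZMod p) ≠ 0 := by
    rw [Ne, ZMod.natCast_eq_zero_iff]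
    intro hdvd
    have h1 : (2*ℓ).choose k0 ∣ (2*ℓ).factorial :=
      ⟨k0.factorial * (2*ℓ - k0).factorial, (Nat.choose_mul_factorial_mul_factorial hk0le).symm ▸ (mul_assoc _ _ _)⟩
    have h2 : p ≤ 2*ℓ := (Nat.Prime.dvd_factorial hp).mp (hdvd.trans h1)
    omega
  exact neg_ne_zero.mpr (mul_ne_zero (pow_ne_zero _ ha) hchoose)

theorem stmt_15 (p ℓ : ℕ) (hp : p.Prime) (hpl : p = 8 * ℓ + 1)
    (hleven : Even ℓ)
    (n : ℕ) (hn : 0 < n) (hn2l : n < 2 * ℓ) (hnodd : Odd n)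
    (a : ZMod p) (ha : a ≠ 0) :
    (((X ^ n * (X ^ 4 + C a)) ^ (2 * ℓ) %ₘ (X ^ p - X)).degree
        = ((p - 1 : ℕ) : WithBot ℕ)) ∧
      ¬ Function.Bijective
        (fun x : ZMod p => Polynomial.eval x (X ^ n * (X ^ 4 + C a))) := by
  haveI : Fact p.Prime := ⟨hp⟩
  have hℓpos : 0 < ℓ := by omega
  set F : (ZMod p)[X] := X ^ n * (X ^ 4 + C a) with hF
  have hevalF : ∀ x : ZMod p, F.eval x = x ^ n * (x ^ 4 + a) := by
    intro x; simp [hF]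
  have hS := key_sum p ℓ hpl hleven n hn hn2l hnodd a ha
  set g : (ZMod p)[X] := F ^ (2 * ℓ) with hg
  have hevalg : ∀ x : ZMod p, g.eval x = (x ^ n * (x ^ 4 + a)) ^ (2 * ℓ) := by
    intro x; rw [hg, eval_pow, hevalF]
  -- q and monicity
  have hq : (X ^ p - X : (ZMod p)[X]).Monic := by
    apply monic_X_pow_sub
    rw [degree_X]
    exact_mod_cast hp.one_lt
  have hdegq : (X ^ p - X : (ZMod p)[X]).degree = p := by
    rw [degree_sub_eq_left_of_degree_lt, degree_X_pow]
    rw [degree_X, degree_X_pow]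
    exact_mod_cast hp.one_lt
  set r : (ZMod p)[X] := g %ₘ (X ^ p - X) with hr
  have hrdeg : r.degree < (p : WithBot ℕ) := by
    rw [← hdegq]; exact degree_modByMonic_lt g hq
  have hrnd : r.natDegree < p := by
    rcases eq_or_ne r 0 with h | h
    · simp [h, hp.pos]
    · exact (natDegree_lt_iff_degree_lt h).mpr hrdeg
  have hevalr : ∀ x : ZMod p, r.eval x = g.eval x := by
    intro x
    conv_rhs => rw [← modByMonic_add_div g (X ^ p - X)]
    simp [ZMod.pow_card, hr]
  -- sum formula
  have hsum1 : ∑ x : ZMod p, r.eval x = r.coeff (p - 1) * (-1) := by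
    calc ∑ x : ZMod p, r.eval x
        = ∑ x : ZMod p, ∑ j ∈ range p, r.coeff j * x ^ j :=
          Finset.sum_congr rfl fun x _ => eval_eq_sum_range' hrnd x
      _ = ∑ j ∈ range p, ∑ x : ZMod p, r.coeff j * x ^ j := Finset.sum_comm
      _ = ∑ j ∈ range p, r.coeff j * ∑ x : ZMod p, x ^ j := by
          exact Finset.sum_congr rfl fun j _ => (Finset.mul_sum _ _ _).symm
      _ = r.coeff (p - 1) * ∑ x : ZMod p, x ^ (p - 1) := by
          apply Finset.sum_eq_single_of_mem (p - 1) (Finset.mem_range.mpr (by omega))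
          intro j hj hne
          rw [Finset.mem_range] at hj
          rcases Nat.eq_zero_or_pos j with h0 | h0
          · subst h0
            simp [Finset.card_univ, ZMod.card, ZMod.natCast_self]
          · rw [sum_pow_zmod p h0, if_neg, mul_zero]
            intro hd
            have := Nat.le_of_dvd h0 hd
            omega
      _ = r.coeff (p - 1) * (-1) := by
            rw [sum_pow_zmod p (by omega : 0 < p - 1), if_pos dvd_rfl]
  have hcoeff : r.coeff (p - 1) ≠ 0 := by
    intro h
    apply hS
    calc ∑ x : ZMod p, (x ^ n * (x ^ 4 + a)) ^ (2 * ℓ)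
        = ∑ x : ZMod p, r.eval x := by
          exact Finset.sum_congr rfl fun x _ => ((hevalr x).trans (hevalg x)).symm
      _ = r.coeff (p - 1) * (-1) := hsum1
      _ = 0 := by rw [h, zero_mul]
  have hr0 : r ≠ 0 := fun h => hcoeff (by simp [h])
  have hnd : r.natDegree = p - 1 :=
    le_antisymm (by omega) (le_natDegree_of_ne_zero hcoeff)
  constructor
  · rw [degree_eq_natDegree hr0, hnd]
  · intro hbij
    apply hS
    have h1 : ∑ x : ZMod p, (x ^ n * (x ^ 4 + a)) ^ (2 * ℓ)
        = ∑ y : ZMod p, y ^ (2 * ℓ) := by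
      refine Fintype.sum_bijective _ hbij _ _ fun x => ?_
      exact congrArg (· ^ (2 * ℓ)) (hevalF x).symm
    rw [h1]
    have h2 : 2 * ℓ < Fintype.card (ZMod p) - 1 := by rw [ZMod.card]; omega
    exact FiniteField.sum_pow_lt_card_sub_one (ZMod p) _ h2
end
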